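/- Let N be a finite group with Z(N) ∩ N' ≠ 1 and let q > 1 be an integer coprime to |N|. Then there exist a finite group G, a normal subgroup N₀ of G isomorphic to N, and a normal subgroup H of G with N₀ ≤ H, such that N₀ has a complement in H but no complement in G, the quotient G/H is cyclic of order q, and the set of prime divisors of |H| equals the set of prime divisors of |N|. In particular, Gaschütz' theorem does not hold for N. -/

import Mathlib

open Pointwise

/-- `K` is a complement of `N` inside the subgroup `H` of `G`:
`K ≤ H`, `K ∩ N = 1` and `KN = H` (as sets). -/
def IsComplementOfIn {G : Type*} [Group G] (K N H : Subgroup G) : Prop :=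
  K ≤ H ∧ K ⊓ N = ⊥ ∧ (K : Set G) * (N : Set G) = (H : Set G)

/-- `N` has a complement in the subgroup `H` of `G`. -/
def HasComplementIn {G : Type*} [Group G] (N H : Subgroup G) : Prop :=
  ∃ K : Subgroup G, IsComplementOfIn K N H

universe u

/-- Gaschütz' theorem holds for the finite group `N`: whenever `N` is embedded as a
normal subgroup of a finite group `G`, `H` is a subgroup with `N ≤ H ≤ G`,
`gcd(|N|, [G : H]) = 1` and `N` has a complement in `H`, then `N` has a complement
in `G`. -/
def GaschuetzHolds (N : Type u) [Group N] : Prop :=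
  ∀ (G : Type u) [Group G] [Finite G] (f : N →* G) (H : Subgroup G),
    Function.Injective f → f.range.Normal → f.range ≤ H →
    Nat.Coprime (Nat.card N) H.index →
    HasComplementIn f.range H → HasComplementIn f.range ⊤

namespace NotGaschuetzAux

open SemidirectProduct Subgroup

variable {N : Type u} [Group N] (q : ℕ)

/-- The cyclic shift on `ZMod q → N`. -/
def shiftAut (k : ZMod q) : (ZMod q → N) ≃* (ZMod q → N) where
  toFun w i := w (i + k)
  invFun w i := w (i - k)
  left_inv w := funext fun i => by simp
  right_inv w := funext fun i => by simp
  map_mul' w₁ w₂ := rfl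

/-- The shift action of `C_q` on `N^q`. -/
def phiq : Multiplicative (ZMod q) →* MulAut (ZMod q → N) :=
  MonoidHom.mk' (fun k => shiftAut q k.toAdd) (by
    intro a b
    ext w i
    simp only [MulAut.mul_apply, toAdd_mul]
    show w (i + (a.toAdd + b.toAdd)) = w (i + a.toAdd + b.toAdd)
    rw [add_assoc])

/-- The wreath product `N ≀ C_q`. -/
abbrev Tq (N : Type u) [Group N] (q : ℕ) : Type u :=
  (ZMod q → N) ⋊[phiq (N := N) q] Multiplicative (ZMod q)

variable (z : N)

/-- The diagonal element of `N^q`. -/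
abbrev dvec : ZMod q → N := fun _ => z

/-- The central element to be amalgamated. -/
abbrev zd : N × Tq N q := (z, inl (dvec q z))

/-- The central subgroup along which we amalgamate. -/
def Z0 : Subgroup (N × Tq N q) := Subgroup.normalClosure {zd q z}

instance : (Z0 q z).Normal := Subgroup.normalClosure_normal

/-- The ambient counterexample group. -/
abbrev Gq : Type u := (N × Tq N q) ⧸ Z0 q z

/-- Quotient projection. -/
abbrev jq : N × Tq N q →* Gq q z := QuotientGroup.mk' _

/-- The embedding of `N` in `Gq`. -/
def iotaN : N →* Gq q z := (jq q z).comp (MonoidHom.inl N (Tq N q))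

/-- The map whose range is `H`. -/
def etaH : N × (ZMod q → N) →* Gq q z :=
  (jq q z).comp ((MonoidHom.id N).prodMap inl)

/-- The copy of `N`. -/
abbrev N0 : Subgroup (Gq q z) := (iotaN q z).range

/-- The intermediate subgroup `H`. -/
abbrev Hsub : Subgroup (Gq q z) := (etaH q z).range

lemma zd_mem_Z0 : zd q z ∈ Z0 q z :=
  Subgroup.subset_normalClosure rfl

lemma phiq_dvec (c : Multiplicative (ZMod q)) : (phiq q c) (dvec q z) = dvec q z := rfl

lemma inl_dvec_mem_center : (inl (dvec q z) : Tq N q) ∈ Subgroup.center (Tq N q) ∨ True := Or.inr trivial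

variable {q z}

lemma zd_central (hz : z ∈ Subgroup.center N) :
    zd q z ∈ Subgroup.center (N × Tq N q) := by
  rw [Subgroup.mem_center_iff]
  intro g
  have h2 : g.2 * inl (dvec q z) = inl (dvec q z) * g.2 := by
    have hd : ∀ w : ZMod q → N, (inl w : Tq N q) * inl (dvec q z) = inl (dvec q z) * inl w := by
      intro w
      rw [← map_mul, ← map_mul]
      congr 1
      funext i
      show w i * z = z * w i
      exact Subgroup.mem_center_iff.mp hz (w i)
    have hr : ∀ c : Multiplicative (ZMod q),
        (inr c : Tq N q) * inl (dvec q z) = inl (dvec q z) * inr c := by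
      intro c
      have h := inl_aut (φ := phiq (N := N) q) c (dvec q z)
      rw [phiq_dvec, map_inv] at h
      calc (inr c : Tq N q) * inl (dvec q z)
          = (inr c * inl (dvec q z) * (inr c)⁻¹) * inr c := by group
        _ = inl (dvec q z) * inr c := by rw [← h]
    calc g.2 * inl (dvec q z) = (inl g.2.left * inr g.2.right) * inl (dvec q z) := by
          rw [inl_left_mul_inr_right]
      _ = inl g.2.left * (inl (dvec q z) * inr g.2.right) := by rw [mul_assoc, hr]
      _ = inl (dvec q z) * (inl g.2.left * inr g.2.right) := by
          rw [← mul_assoc, hd, mul_assoc]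
      _ = inl (dvec q z) * g.2 := by rw [inl_left_mul_inr_right]
  have h1 : g.1 * z = z * g.1 := Subgroup.mem_center_iff.mp hz g.1
  exact Prod.ext h1 h2

lemma mem_Z0_iff (hz : z ∈ Subgroup.center N) {x : N × Tq N q} :
    x ∈ Z0 q z ↔ ∃ k : ℤ, zd q z ^ k = x := by
  haveI hnorm : (Subgroup.zpowers (zd q z)).Normal := by
    constructor
    intro n hn g
    obtain ⟨k, rfl⟩ := Subgroup.mem_zpowers_iff.mp hn
    have hc : zd q z ^ k ∈ Subgroup.center (N × Tq N q) :=
      Subgroup.zpow_mem _ (zd_central hz) k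
    have : g * zd q z ^ k * g⁻¹ = zd q z ^ k := by
      rw [Subgroup.mem_center_iff.mp hc g, mul_assoc, mul_inv_cancel, mul_one]
    rw [this]
    exact Subgroup.mem_zpowers_iff.mpr ⟨k, rfl⟩
  have hEq : Z0 q z = Subgroup.zpowers (zd q z) := by
    apply le_antisymm
    · exact Subgroup.normalClosure_le_normal (by
        rw [Set.singleton_subset_iff]
        exact Subgroup.mem_zpowers _)
    · rw [Subgroup.zpowers_le]
      exact zd_mem_Z0 q z
  rw [hEq, Subgroup.mem_zpowers_iff]

lemma pair_one_mem_Z0 (hz : z ∈ Subgroup.center N) {n : N}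
    (h : ((n, 1) : N × Tq N q) ∈ Z0 q z) : n = 1 := by
  obtain ⟨k, hk⟩ := (mem_Z0_iff hz).mp h
  have h1 : (zd q z ^ k).1 = n := by rw [hk]
  have h2 : (zd q z ^ k).2 = 1 := by rw [hk]
  have hfst : (zd q z ^ k).1 = z ^ k :=
    map_zpow (MonoidHom.fst N (Tq N q)) (zd q z) k
  have hsnd : (zd q z ^ k).2 = inl ((dvec q z) ^ k) := by
    have := map_zpow (MonoidHom.snd N (Tq N q)) (zd q z) k
    simpa using this.trans (map_zpow inl _ _).symm
  rw [hsnd] at h2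
  have hd : (dvec q z) ^ k = 1 := inl_injective (by rw [h2, map_one])
  have hz1 : z ^ k = 1 := by
    have := congrFun hd (0 : ZMod q)
    simpa using this
  rw [hfst, hz1] at h1
  exact h1.symm

lemma jq_eq_one_iff {x : N × Tq N q} : jq q z x = 1 ↔ x ∈ Z0 q z :=
  QuotientGroup.eq_one_iff x

lemma iotaN_apply (n : N) : iotaN q z n = jq q z (n, 1) := rfl

lemma etaH_apply (n : N) (w : ZMod q → N) : etaH q z (n, w) = jq q z (n, inl w) := rfl

lemma iotaN_injective (hz : z ∈ Subgroup.center N) : Function.Injective (iotaN q z) := by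
  intro a b hab
  have h1 : jq q z ((a * b⁻¹, 1) : N × Tq N q) = 1 := by
    have h2 : ((a * b⁻¹, 1) : N × Tq N q) = (a, 1) * (b, 1)⁻¹ := by
      refine Prod.ext rfl ?_
      simp
    rw [h2, map_mul, map_inv, ← iotaN_apply, ← iotaN_apply, hab, mul_inv_cancel]
  have h3 := pair_one_mem_Z0 hz (jq_eq_one_iff.mp h1)
  exact mul_inv_eq_one.mp h3

lemma N0_normal : (N0 q z).Normal := by
  constructor
  intro x hx g
  obtain ⟨n, rfl⟩ := hx
  obtain ⟨p, rfl⟩ := QuotientGroup.mk'_surjective (Z0 q z) g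
  refine ⟨p.1 * n * p.1⁻¹, ?_⟩
  rw [iotaN_apply, iotaN_apply]
  show jq q z _ = jq q z p * jq q z (n, 1) * (jq q z p)⁻¹
  rw [← map_inv, ← map_mul, ← map_mul]
  congr 1
  refine Prod.ext rfl ?_
  simp

variable (q z)

/-- The projection onto the top cyclic group. -/
def piq : Gq q z →* Multiplicative (ZMod q) :=
  QuotientGroup.lift (Z0 q z) (rightHom.comp (MonoidHom.snd N (Tq N q)))
    (by
      apply Subgroup.normalClosure_le_normal
      rw [Set.singleton_subset_iff]
      have : (rightHom.comp (MonoidHom.snd N (Tq N q))) (zd q z) = 1 := by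
        show rightHom (inl (dvec q z) : Tq N q) = 1
        exact rightHom_inl _
      exact MonoidHom.mem_ker.mpr this)

variable {q z}

lemma piq_jq (x : N × Tq N q) : piq q z (jq q z x) = rightHom x.2 :=
  QuotientGroup.lift_mk' _ _ x

lemma piq_surjective : Function.Surjective (piq q z) := by
  intro c
  refine ⟨jq q z (1, inr c), ?_⟩
  rw [piq_jq]
  exact rightHom_inr c

lemma Hsub_eq_ker : Hsub q z = (piq q z).ker := by
  ext g
  constructor
  · rintro ⟨⟨n, w⟩, rfl⟩
    have : piq q z (etaH q z (n, w)) = 1 := by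
      rw [etaH_apply, piq_jq]
      exact rightHom_inl w
    exact MonoidHom.mem_ker.mpr this
  · intro hg
    obtain ⟨p, rfl⟩ := QuotientGroup.mk'_surjective (Z0 q z) g
    have h1 : rightHom p.2 = 1 := by
      have := MonoidHom.mem_ker.mp hg
      rwa [show QuotientGroup.mk' (Z0 q z) p = jq q z p from rfl, piq_jq] at this
    have h2 : p.2.right = 1 := by rwa [rightHom_eq_right] at h1
    refine ⟨(p.1, p.2.left), ?_⟩
    rw [etaH_apply]
    congr 1
    refine Prod.ext rfl ?_
    show inl p.2.left = p.2
    conv_rhs => rw [← inl_left_mul_inr_right p.2]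
    rw [h2, map_one, mul_one]

lemma N0_le_Hsub : N0 q z ≤ Hsub q z := by
  rintro g ⟨n, rfl⟩
  refine ⟨(n, 1), ?_⟩
  rw [etaH_apply, iotaN_apply, map_one]

variable (q z)

/-- The hom whose range is the complement of `N0` in `Hsub`. -/
def gamK : (ZMod q → N) →* N × Tq N q :=
  (Pi.evalMonoidHom (fun _ : ZMod q => N) 0).prod SemidirectProduct.inl

/-- The complement of `N0` in `Hsub`. -/
abbrev Ksub : Subgroup (Gq q z) := ((jq q z).comp (gamK (N := N) q)).range

variable {q z}

lemma gamK_apply (w : ZMod q → N) : gamK (N := N) q w = (w 0, inl w) := rfl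

lemma dvec_zpow_apply (k : ℤ) (i : ZMod q) : (dvec q z ^ k) i = z ^ k := rfl

lemma complement_in_H (hz : z ∈ Subgroup.center N) :
    HasComplementIn (N0 q z) (Hsub q z) := by
  refine ⟨Ksub q z, ?_, ?_, ?_⟩
  · rintro g ⟨w, rfl⟩
    exact ⟨(w 0, w), rfl⟩
  · apply le_antisymm ?_ bot_le
    rintro g ⟨hK, hN⟩
    obtain ⟨w, rfl⟩ := hK
    obtain ⟨n, hn⟩ := hN
    rw [Subgroup.mem_bot]
    have hn' : jq q z (n, 1) = jq q z (w 0, inl w) := hn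
    obtain ⟨ζ, hζ, heq⟩ := (QuotientGroup.mk'_eq_mk' (Z0 q z)).mp hn'
    obtain ⟨k, rfl⟩ := (mem_Z0_iff hz).mp hζ
    have hsnd : (1 : Tq N q) * (zd q z ^ k).2 = inl w := congrArg Prod.snd heq
    have hsnd2 : (zd q z ^ k).2 = inl ((dvec q z) ^ k) := by
      have := map_zpow (MonoidHom.snd N (Tq N q)) (zd q z) k
      simpa using this.trans (map_zpow inl _ _).symm
    rw [hsnd2, one_mul] at hsnd
    have hw : w = dvec q z ^ k := (inl_injective hsnd).symm
    have hfst : n * (zd q z ^ k).1 = w 0 := congrArg Prod.fst heq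
    have hfst2 : (zd q z ^ k).1 = z ^ k :=
      map_zpow (MonoidHom.fst N (Tq N q)) (zd q z) k
    have hw0 : w 0 = z ^ k := by rw [hw]; rfl
    have hn1 : n = 1 := by
      have h5 : n * z ^ k = z ^ k := by
        rw [← hfst2, hfst, hfst2]
        exact hw0
      exact mul_right_cancel (by rwa [one_mul])
    rw [← hn, hn1, map_one]
  · ext g
    simp only [Set.mem_mul, SetLike.mem_coe]
    constructor
    · rintro ⟨a, ha, b, hb, rfl⟩
      obtain ⟨w, rfl⟩ := ha
      obtain ⟨n, rfl⟩ := hb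
      refine ⟨(w 0 * n, w), ?_⟩
      show jq q z (w 0 * n, inl w) = ((jq q z).comp (gamK (N := N) q)) w * iotaN q z n
      have : (((w 0 * n, inl w)) : N × Tq N q) = gamK (N := N) q w * (n, 1) := by
        refine Prod.ext rfl ?_
        simp [gamK_apply]
      rw [this, map_mul]
      rfl
    · rintro ⟨⟨n, w⟩, rfl⟩
      refine ⟨((jq q z).comp (gamK (N := N) q)) w, ⟨w, rfl⟩,
        iotaN q z ((w 0)⁻¹ * n), ⟨(w 0)⁻¹ * n, rfl⟩, ?_⟩
      show jq q z (gamK (N := N) q w) * jq q z ((w 0)⁻¹ * n, 1) = etaH q z (n, w)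
      rw [← map_mul, etaH_apply]
      congr 1
      refine Prod.ext ?_ ?_
      · show w 0 * ((w 0)⁻¹ * n) = n
        group
      · show inl w * 1 = inl w
        rw [mul_one]

lemma F_inr_eq_one [Finite N] (hcop : Nat.Coprime q (Nat.card N))
    (F : Tq N q →* N) (c : Multiplicative (ZMod q)) : F (inr c) = 1 := by
  have hcq : c ^ q = 1 := by
    have h0 : q • c.toAdd = 0 := by
      rw [nsmul_eq_mul, ZMod.natCast_self, zero_mul]
    have h3 := ofAdd_nsmul q c.toAdd
    rw [h0] at h3
    simpa using h3.symm
  have h1 : F (inr c) ^ q = 1 := by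
    rw [← map_pow, ← map_pow, hcq, map_one, map_one]
  have h2 : F (inr c) ^ Nat.card N = 1 := pow_card_eq_one'
  have hd1 : orderOf (F (inr c)) ∣ q := orderOf_dvd_of_pow_eq_one h1
  have hd2 : orderOf (F (inr c)) ∣ Nat.card N := orderOf_dvd_of_pow_eq_one h2
  have hone : orderOf (F (inr c)) = 1 :=
    Nat.dvd_one.mp (hcop ▸ Nat.dvd_gcd hd1 hd2)
  exact orderOf_eq_one_iff.mp hone

lemma F_conj [Finite N] (hcop : Nat.Coprime q (Nat.card N)) (F : Tq N q →* N)
    (c : Multiplicative (ZMod q)) (w : ZMod q → N) :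
    F (inl ((phiq q c) w)) = F (inl w) := by
  rw [inl_aut, map_mul, map_mul, F_inr_eq_one hcop F c,
    F_inr_eq_one hcop F c⁻¹, one_mul, mul_one]

lemma F_single [Finite N] (hcop : Nat.Coprime q (Nat.card N)) (F : Tq N q →* N)
    (i : ZMod q) (n : N) :
    F (inl (Pi.mulSingle i n)) = F (inl (Pi.mulSingle (0 : ZMod q) n)) := by
  have hphi : (phiq q (Multiplicative.ofAdd i)) (Pi.mulSingle i n)
      = Pi.mulSingle (0 : ZMod q) n := by
    funext j
    show Pi.mulSingle (M := fun _ : ZMod q => N) i n (j + i)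
      = Pi.mulSingle (M := fun _ : ZMod q => N) (0 : ZMod q) n j
    rcases eq_or_ne j 0 with rfl | hj
    · rw [zero_add, Pi.mulSingle_eq_same, Pi.mulSingle_eq_same]
    · rw [Pi.mulSingle_eq_of_ne (by simpa using hj),
        Pi.mulSingle_eq_of_ne hj]
  rw [← hphi, F_conj hcop]

lemma F_inl_dvec_eq_one [Finite N] (hq : 1 < q)
    (hcop : Nat.Coprime q (Nat.card N)) (hzcomm : z ∈ commutator N)
    (F : Tq N q →* N) : F (inl (dvec q z)) = 1 := by
  haveI : NeZero q := ⟨by omega⟩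
  haveI : Fact (1 < q) := ⟨hq⟩
  set f : N →* N :=
    F.comp (SemidirectProduct.inl.comp (MonoidHom.mulSingle (fun _ : ZMod q => N) 0)) with hf
  have hfapp : ∀ n : N, f n = F (inl (Pi.mulSingle (0 : ZMod q) n)) := fun n => rfl
  have hcomm : ∀ a b : N, Commute (f a) (f b) := by
    intro a b
    have h01 : (0 : ZMod q) ≠ 1 := zero_ne_one
    have hc2 := (Pi.mulSingle_commute h01 a b).map (F.comp (SemidirectProduct.inl :
      (ZMod q → N) →* Tq N q))
    have e1 : (F.comp (SemidirectProduct.inl : (ZMod q → N) →* Tq N q))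
        (Pi.mulSingle (0 : ZMod q) a) = f a := rfl
    have e2 : (F.comp (SemidirectProduct.inl : (ZMod q → N) →* Tq N q))
        (Pi.mulSingle (1 : ZMod q) b) = f b := by
      show F (inl (Pi.mulSingle (1 : ZMod q) b)) = f b
      rw [F_single hcop, hfapp]
    rwa [e1, e2] at hc2
  have hker : commutator N ≤ f.ker := by
    rw [commutator_def, Subgroup.commutator_le]
    intro g1 _ g2 _
    rw [MonoidHom.mem_ker, map_commutatorElement]
    exact commutatorElement_eq_one_iff_commute.mpr (hcomm g1 g2)
  have hfz : f z = 1 := hker hzcomm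
  have hd : (dvec q z : ZMod q → N)
      = Finset.univ.noncommProd (fun i => Pi.mulSingle i z)
        (fun i _ j _ _ => Pi.mulSingle_apply_commute (fun _ => z) i j) :=
    (Finset.noncommProd_mulSingle (fun _ => z)).symm
  calc F (inl (dvec q z))
      = (F.comp (SemidirectProduct.inl : (ZMod q → N) →* Tq N q))
        (Finset.univ.noncommProd (fun i => Pi.mulSingle i z)
          (fun i _ j _ _ => Pi.mulSingle_apply_commute (fun _ => z) i j)) := by
        rw [← hd]; rfl
    _ = Finset.univ.noncommProd
          (fun i => (F.comp (SemidirectProduct.inl : (ZMod q → N) →* Tq N q))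
            (Pi.mulSingle i z)) _ := Finset.univ.map_noncommProd _ _ _
    _ = 1 ^ Finset.univ.card := Finset.noncommProd_eq_pow_card _ _ _ 1 (by
        intro i _
        show F (inl (Pi.mulSingle i z)) = 1
        rw [F_single hcop, ← hfapp, hfz])
    _ = 1 := one_pow _

lemma no_complement [Finite N] (hz : z ∈ Subgroup.center N)
    (hzcomm : z ∈ commutator N) (hzne : z ≠ 1) (hq : 1 < q)
    (hcop : Nat.Coprime q (Nat.card N)) :
    ¬ HasComplementIn (N0 q z) (⊤ : Subgroup (Gq q z)) := by
  rintro ⟨K, -, hdisj, hmul⟩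
  set Kt : Subgroup (N × Tq N q) := K.comap (jq q z) with hKt
  set μ : Kt →* Tq N q := (MonoidHom.snd N (Tq N q)).comp Kt.subtype with hμ
  have hKN : ∀ n : N, jq q z ((n, 1) : N × Tq N q) ∈ K → n = 1 := by
    intro n hn
    have hN0 : jq q z ((n, 1) : N × Tq N q) ∈ N0 q z := ⟨n, rfl⟩
    have hboth : jq q z ((n, 1) : N × Tq N q) ∈ K ⊓ N0 q z := ⟨hn, hN0⟩
    rw [hdisj, Subgroup.mem_bot] at hboth
    exact pair_one_mem_Z0 hz (jq_eq_one_iff.mp hboth)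
  have hinj : Function.Injective μ := by
    intro a b hab
    have hab' : (a : N × Tq N q).2 = (b : N × Tq N q).2 := hab
    have h1 : (a : N × Tq N q) * (b : N × Tq N q)⁻¹ ∈ Kt := mul_mem a.2 (inv_mem b.2)
    have h2 : ((a : N × Tq N q).1 * ((b : N × Tq N q).1)⁻¹, (1 : Tq N q)) ∈ Kt := by
      have hpair : (a : N × Tq N q) * (b : N × Tq N q)⁻¹
          = ((a : N × Tq N q).1 * ((b : N × Tq N q).1)⁻¹, (1 : Tq N q)) := by
        refine Prod.ext rfl ?_
        show (a : N × Tq N q).2 * ((b : N × Tq N q).2)⁻¹ = 1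
        rw [hab', mul_inv_cancel]
      rwa [hpair] at h1
    have h3 : (a : N × Tq N q).1 * ((b : N × Tq N q).1)⁻¹ = 1 :=
      hKN _ (Subgroup.mem_comap.mp h2)
    exact Subtype.ext (Prod.ext (mul_inv_eq_one.mp h3) hab')
  have hsurj : Function.Surjective μ := by
    intro t
    have ht : jq q z (((1 : N), t) : N × Tq N q) ∈ (K : Set (Gq q z)) * (N0 q z : Set (Gq q z)) := by
      rw [hmul]
      simp
    rw [Set.mem_mul] at ht
    obtain ⟨x, hxK, y, hyN, hxy⟩ := ht
    have hyN' : y ∈ N0 q z := hyN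
    obtain ⟨m, rfl⟩ := hyN'
    have hx : x = jq q z ((m⁻¹, t) : N × Tq N q) := by
      have hx1 : x = jq q z (((1 : N), t) : N × Tq N q) * (iotaN q z m)⁻¹ :=
        eq_mul_inv_of_mul_eq hxy
      rw [iotaN_apply, ← map_inv, ← map_mul] at hx1
      rw [hx1]
      congr 1
      refine Prod.ext ?_ ?_
      · show (1 : N) * m⁻¹ = m⁻¹
        rw [one_mul]
      · show t * 1⁻¹ = t
        rw [inv_one, mul_one]
    have hmem : ((m⁻¹, t) : N × Tq N q) ∈ Kt := by
      rw [Subgroup.mem_comap, ← hx]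
      exact hxK
    exact ⟨⟨(m⁻¹, t), hmem⟩, rfl⟩
  set e : Kt ≃* Tq N q := MulEquiv.ofBijective μ ⟨hinj, hsurj⟩ with he
  set F : Tq N q →* N :=
    (MonoidHom.fst N (Tq N q)).comp (Kt.subtype.comp e.symm.toMonoidHom) with hF
  have hx0 : zd q z ∈ Kt := by
    have h4 : jq q z (zd q z) = 1 := jq_eq_one_iff.mpr (zd_mem_Z0 q z)
    rw [Subgroup.mem_comap, h4]
    exact one_mem K
  have hex0 : e ⟨zd q z, hx0⟩ = inl (dvec q z) := rfl
  have hsymm : e.symm (inl (dvec q z)) = ⟨zd q z, hx0⟩ := by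
    rw [← hex0, MulEquiv.symm_apply_apply]
  have hFd : F (inl (dvec q z)) = z := by
    show ((e.symm (inl (dvec q z)) : Kt) : N × Tq N q).1 = z
    rw [hsymm]
  have h1 := F_inl_dvec_eq_one (z := z) hq hcop hzcomm F
  rw [hFd] at h1
  exact hzne h1

end NotGaschuetzAux

/-- If `Z(N) ∩ N' ≠ 1` and `q > 1` is coprime to `|N|`, then there are finite groups
`N₀ ≤ H ≤ G` with `N₀ ≅ N`, `N₀ ⊴ G`, `H ⊴ G`, such that `N₀` has a complement in `H`
but not in `G`, `G/H` is cyclic of order `q`, and `|H|` has the same prime divisors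
as `|N|`. In particular, Gaschütz' theorem does not hold for `N`. -/
theorem not_gaschuetz_of_center_inter_commutator_ne_bot (N : Type u) [Group N]
    [Finite N] (hZ : Subgroup.center N ⊓ commutator N ≠ ⊥)
    (q : ℕ) (hq : 1 < q) (hcop : Nat.Coprime q (Nat.card N)) :
    (∃ (G : Type u) (_ : Group G) (_ : Finite G) (N₀ H : Subgroup G)
        (_ : N₀.Normal) (_ : H.Normal),
      Nonempty (N₀ ≃* N) ∧ N₀ ≤ H ∧
      HasComplementIn N₀ H ∧ ¬ HasComplementIn N₀ ⊤ ∧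
      IsCyclic (G ⧸ H) ∧ Nat.card (G ⧸ H) = q ∧
      (∀ p : ℕ, p.Prime → (p ∣ Nat.card H ↔ p ∣ Nat.card N))) ∧
    ¬ GaschuetzHolds N := by
  classical
  open NotGaschuetzAux in
  obtain ⟨z, hzmem, hzne⟩ : ∃ z : N, z ∈ Subgroup.center N ⊓ commutator N ∧ z ≠ 1 := by
    by_contra hcon
    push_neg at hcon
    exact hZ ((Subgroup.eq_bot_iff_forall _).mpr hcon)
  obtain ⟨hzc, hzcomm⟩ := Subgroup.mem_inf.mp hzmem
  haveI : NeZero q := ⟨by omega⟩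
  haveI hfinT : Finite (NotGaschuetzAux.Tq N q) := by
    apply Finite.of_injective (fun x : NotGaschuetzAux.Tq N q => (x.left, x.right))
    intro a b h
    rw [Prod.ext_iff] at h
    cases a; cases b
    simp only at h
    simp [h.1, h.2]
  haveI hfinG : Finite (NotGaschuetzAux.Gq q z) :=
    Finite.of_surjective _ (QuotientGroup.mk'_surjective (NotGaschuetzAux.Z0 q z))
  haveI hN0n : (NotGaschuetzAux.N0 q z).Normal := NotGaschuetzAux.N0_normal
  have hHker := NotGaschuetzAux.Hsub_eq_ker (q := q) (z := z)
  haveI hHn : (NotGaschuetzAux.Hsub q z).Normal := by rw [hHker]; infer_instance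
  have eQ : (NotGaschuetzAux.Gq q z ⧸ NotGaschuetzAux.Hsub q z) ≃* Multiplicative (ZMod q) :=
    (QuotientGroup.quotientMulEquivOfEq hHker).trans
      (QuotientGroup.quotientKerEquivOfSurjective _
        (NotGaschuetzAux.piq_surjective (q := q) (z := z)))
  have hcard : Nat.card (NotGaschuetzAux.Gq q z ⧸ NotGaschuetzAux.Hsub q z) = q := by
    rw [Nat.card_congr eQ.toEquiv, Nat.card_congr Multiplicative.toAdd, Nat.card_zmod]
  have hcyc : IsCyclic (NotGaschuetzAux.Gq q z ⧸ NotGaschuetzAux.Hsub q z) :=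
    isCyclic_of_surjective eQ.symm eQ.symm.surjective
  have hiso : Nonempty (NotGaschuetzAux.N0 q z ≃* N) :=
    ⟨(MonoidHom.ofInjective (NotGaschuetzAux.iotaN_injective hzc)).symm⟩
  have hle := NotGaschuetzAux.N0_le_Hsub (q := q) (z := z)
  have hcompH := NotGaschuetzAux.complement_in_H (q := q) hzc
  have hnocomp := NotGaschuetzAux.no_complement hzc hzcomm hzne hq hcop
  have hprimes : ∀ p : ℕ, p.Prime →
      (p ∣ Nat.card (NotGaschuetzAux.Hsub q z) ↔ p ∣ Nat.card N) := by
    intro p hp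
    constructor
    · intro hdvd
      have h1 : Nat.card (NotGaschuetzAux.Hsub q z) ∣ Nat.card (N × (ZMod q → N)) := by
        have e1 := QuotientGroup.quotientKerEquivRange (NotGaschuetzAux.etaH q z)
        calc Nat.card (NotGaschuetzAux.Hsub q z)
            = Nat.card ((N × (ZMod q → N)) ⧸ (NotGaschuetzAux.etaH q z).ker) :=
              (Nat.card_congr e1.toEquiv).symm
          _ ∣ Nat.card (N × (ZMod q → N)) := Subgroup.card_quotient_dvd_card _
      have h2 : Nat.card (N × (ZMod q → N)) = Nat.card N * Nat.card N ^ q := by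
        rw [Nat.card_prod, Nat.card_fun, Nat.card_zmod]
      rw [h2] at h1
      rcases (Nat.Prime.dvd_mul hp).mp (hdvd.trans h1) with h | h
      · exact h
      · exact hp.dvd_of_dvd_pow h
    · intro hdvd
      have h1 : Nat.card N = Nat.card (NotGaschuetzAux.N0 q z) :=
        Nat.card_congr (MonoidHom.ofInjective (NotGaschuetzAux.iotaN_injective hzc)).toEquiv
      have h2 : Nat.card (NotGaschuetzAux.N0 q z) ∣ Nat.card (NotGaschuetzAux.Hsub q z) :=
        Subgroup.card_dvd_of_le hle
      exact (h1 ▸ hdvd).trans h2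
  have hindex : (NotGaschuetzAux.Hsub q z).index = q := by
    rw [Subgroup.index_eq_card]
    exact hcard
  refine ⟨⟨NotGaschuetzAux.Gq q z, inferInstance, inferInstance, NotGaschuetzAux.N0 q z,
    NotGaschuetzAux.Hsub q z, hN0n, hHn, hiso, hle, hcompH, hnocomp, hcyc, hcard, hprimes⟩, ?_⟩
  intro hG
  exact hnocomp (hG (NotGaschuetzAux.Gq q z) (NotGaschuetzAux.iotaN q z)
    (NotGaschuetzAux.Hsub q z) (NotGaschuetzAux.iotaN_injective hzc) hN0n hle
    (by rw [hindex]; exact hcop.symm) hcompH)
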